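/- For a binary linear code C of length n and any i with 0 ≤ i ≤ n/2, the number of zero neighbors of weight 2i in the extended code C_ex equals L_{2i-1}(C) + L_{2i}(C) + N_{2i}(C), where L_w(C) is the number of zero neighbors of weight w in C and N_{2i}(C) is the number of only-odd-decomposable codewords of weight 2i in C. -/

import Mathlib

open Finset

/-- Support of a binary vector: the set of nonzero coordinates. -/
def supp {n : ℕ} (v : Fin n → ZMod 2) : Finset (Fin n) :=
  Finset.univ.filter fun i => v i ≠ 0

/-- Hamming weight. -/
def wt {n : ℕ} (v : Fin n → ZMod 2) : ℕ := (supp v).card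

/-- A nonzero codeword of `D` is a zero neighbor (minimal codeword) if no nonzero
codeword of `D` has support strictly contained in its support. -/
def IsZeroNeighbor {n : ℕ} (D : Set (Fin n → ZMod 2)) (v : Fin n → ZMod 2) : Prop :=
  v ∈ D ∧ v ≠ 0 ∧ ∀ v' ∈ D, v' ≠ 0 → ¬ supp v' ⊂ supp v

/-- `v` is decomposable in `D` if it is the sum of two nonzero codewords of `D`
with disjoint supports. -/
def Decomposable {n : ℕ} (D : Set (Fin n → ZMod 2)) (v : Fin n → ZMod 2) : Prop :=
  ∃ v1 v2, v1 ∈ D ∧ v2 ∈ D ∧ v1 ≠ 0 ∧ v2 ≠ 0 ∧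
    Disjoint (supp v1) (supp v2) ∧ v = v1 + v2

/-- Extension of a vector by its overall parity bit. -/
def extVec {n : ℕ} (v : Fin n → ZMod 2) : Fin (n + 1) → ZMod 2 :=
  Fin.snoc v (∑ i, v i)

/-- The extended code. -/
def extCode {n : ℕ} (C : Submodule (ZMod 2) (Fin n → ZMod 2)) :
    Set (Fin (n + 1) → ZMod 2) :=
  extVec '' (C : Set (Fin n → ZMod 2))

/-- An even-weight codeword is only-odd-decomposable if it is decomposable and in every
decomposition into nonzero disjoint-support codewords both parts have odd weight. -/
def OnlyOddDecomposable {n : ℕ} (C : Submodule (ZMod 2) (Fin n → ZMod 2))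
    (v : Fin n → ZMod 2) : Prop :=
  Even (wt v) ∧ Decomposable (C : Set (Fin n → ZMod 2)) v ∧
    ∀ v1 v2, v1 ∈ C → v2 ∈ C → v1 ≠ 0 → v2 ≠ 0 →
      Disjoint (supp v1) (supp v2) → v = v1 + v2 → Odd (wt v1) ∧ Odd (wt v2)

/-- `L_w(D)`: the number of zero neighbors of weight `w` in `D`. -/
noncomputable def Lw {n : ℕ} (D : Set (Fin n → ZMod 2)) (w : ℕ) : ℕ :=
  {v : Fin n → ZMod 2 | IsZeroNeighbor D v ∧ wt v = w}.ncard

/-- `N_w(C)`: the number of only-odd-decomposable codewords of weight `w` in `C`. -/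
noncomputable def Nw {n : ℕ} (C : Submodule (ZMod 2) (Fin n → ZMod 2)) (w : ℕ) : ℕ :=
  {v : Fin n → ZMod 2 | v ∈ C ∧ OnlyOddDecomposable C v ∧ wt v = w}.ncard

/-- Action of a coordinate permutation on a vector. -/
def permVec {n : ℕ} (π : Equiv.Perm (Fin n)) (v : Fin n → ZMod 2) : Fin n → ZMod 2 :=
  v ∘ π.symm

/-- `π` is an automorphism of the code `D`. -/
def IsAut {n : ℕ} (D : Set (Fin n → ZMod 2)) (π : Equiv.Perm (Fin n)) : Prop :=
  permVec π '' D = D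

/-- The even weight subcode of `C`, as a set. -/
def evenSub {n : ℕ} (C : Submodule (ZMod 2) (Fin n → ZMod 2)) :
    Set (Fin n → ZMod 2) :=
  {v : Fin n → ZMod 2 | v ∈ C ∧ Even (wt v)}

lemma zmod2_cases : ∀ a : ZMod 2, a = 0 ∨ a = 1 := by decide

lemma mem_supp {n : ℕ} {v : Fin n → ZMod 2} {i : Fin n} : i ∈ supp v ↔ v i ≠ 0 := by
  simp [supp]

lemma supp_eq_empty {n : ℕ} {v : Fin n → ZMod 2} : supp v = ∅ ↔ v = 0 := by
  constructor
  · intro h; funext i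
    by_contra hi
    exact Finset.notMem_empty i (h ▸ mem_supp.2 hi)
  · intro h; subst h; ext i; simp [supp]

lemma wt_eq_zero {n : ℕ} {v : Fin n → ZMod 2} : wt v = 0 ↔ v = 0 := by
  rw [wt, Finset.card_eq_zero, supp_eq_empty]

lemma sum_eq_wt {n : ℕ} (v : Fin n → ZMod 2) : ∑ i, v i = (wt v : ZMod 2) := by
  have h1 : ∑ i, v i = ∑ i ∈ supp v, v i := (Finset.sum_filter_ne_zero _).symm
  have h2 : ∑ i ∈ supp v, v i = ∑ _i ∈ supp v, (1 : ZMod 2) := by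
    refine Finset.sum_congr rfl fun i hi => ?_
    rcases zmod2_cases (v i) with h | h
    · exact absurd h (mem_supp.1 hi)
    · exact h
  rw [h1, h2, Finset.sum_const, nsmul_eq_mul, mul_one, wt]

lemma even_wt_iff {n : ℕ} (v : Fin n → ZMod 2) : Even (wt v) ↔ ∑ i, v i = 0 := by
  rw [sum_eq_wt, ZMod.natCast_eq_zero_iff]; exact even_iff_two_dvd

lemma extVec_castSucc {n : ℕ} (v : Fin n → ZMod 2) (j : Fin n) :
    extVec v (Fin.castSucc j) = v j := Fin.snoc_castSucc _ _ _

lemma extVec_last {n : ℕ} (v : Fin n → ZMod 2) :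
    extVec v (Fin.last n) = ∑ i, v i := Fin.snoc_last _ _

lemma extVec_injective {n : ℕ} : Function.Injective (extVec (n := n)) := by
  intro u w h
  funext j
  have := congrFun h (Fin.castSucc j)
  rwa [extVec_castSucc, extVec_castSucc] at this

lemma extVec_zero {n : ℕ} : extVec (0 : Fin n → ZMod 2) = 0 := by
  funext j
  refine Fin.lastCases ?_ ?_ j
  · rw [extVec_last]; simp
  · intro k; rw [extVec_castSucc]; rfl

lemma extVec_ne_zero {n : ℕ} {v : Fin n → ZMod 2} (h : v ≠ 0) : extVec v ≠ 0 := by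
  intro hv
  exact h (extVec_injective (hv.trans extVec_zero.symm))

lemma supp_extVec_of_even {n : ℕ} {v : Fin n → ZMod 2} (h : Even (wt v)) :
    supp (extVec v) = (supp v).image Fin.castSucc := by
  ext j
  refine Fin.lastCases ?_ ?_ j
  · have h0 : ∑ i, v i = 0 := (even_wt_iff v).1 h
    simp only [mem_supp, extVec_last, h0, ne_eq, not_true_eq_false, false_iff,
      Finset.mem_image, not_exists]
    rintro k ⟨_, hk⟩
    exact (Fin.castSucc_lt_last k).ne hk
  · intro k
    simp [mem_supp, extVec_castSucc, Fin.castSucc_inj]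

lemma supp_extVec_of_odd {n : ℕ} {v : Fin n → ZMod 2} (h : ¬ Even (wt v)) :
    supp (extVec v) = insert (Fin.last n) ((supp v).image Fin.castSucc) := by
  ext j
  refine Fin.lastCases ?_ ?_ j
  · have h0 : ∑ i, v i ≠ 0 := fun hh => h ((even_wt_iff v).2 hh)
    simp [mem_supp, extVec_last, h0]
  · intro k
    have : (Fin.castSucc k) ≠ Fin.last n := (Fin.castSucc_lt_last k).ne
    simp [mem_supp, extVec_castSucc, Fin.castSucc_inj, this]

lemma last_not_mem_image {n : ℕ} (s : Finset (Fin n)) :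
    Fin.last n ∉ s.image Fin.castSucc := by
  simp only [Finset.mem_image, not_exists]
  rintro k ⟨_, hk⟩
  exact (Fin.castSucc_lt_last k).ne hk

lemma wt_extVec_of_even {n : ℕ} {v : Fin n → ZMod 2} (h : Even (wt v)) :
    wt (extVec v) = wt v := by
  rw [wt, supp_extVec_of_even h, Finset.card_image_of_injective _ (Fin.castSucc_injective n)]
  rfl

lemma wt_extVec_of_odd {n : ℕ} {v : Fin n → ZMod 2} (h : ¬ Even (wt v)) :
    wt (extVec v) = wt v + 1 := by
  rw [wt, supp_extVec_of_odd h, Finset.card_insert_of_notMem (last_not_mem_image _),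
    Finset.card_image_of_injective _ (Fin.castSucc_injective n)]
  rfl

lemma add_self_vec {n : ℕ} (v : Fin n → ZMod 2) : v + v = 0 := by
  funext i
  show v i + v i = 0
  rcases zmod2_cases (v i) with h | h <;> rw [h] <;> decide

lemma supp_add_of_disjoint {n : ℕ} {v1 v2 : Fin n → ZMod 2}
    (h : Disjoint (supp v1) (supp v2)) : supp (v1 + v2) = supp v1 ∪ supp v2 := by
  ext i
  simp only [mem_supp, Finset.mem_union]
  have hd : ¬ (v1 i ≠ 0 ∧ v2 i ≠ 0) := by
    rintro ⟨h1, h2⟩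
    exact (Finset.disjoint_left.1 h) (mem_supp.2 h1) (mem_supp.2 h2)
  show v1 i + v2 i ≠ 0 ↔ _
  rcases zmod2_cases (v1 i) with h1 | h1 <;> rcases zmod2_cases (v2 i) with h2 | h2 <;>
    simp_all <;> decide

lemma supp_add_of_subset {n : ℕ} {v v' : Fin n → ZMod 2}
    (h : supp v' ⊆ supp v) : supp (v + v') = supp v \ supp v' := by
  ext i
  simp only [mem_supp, Finset.mem_sdiff]
  have hd : v' i ≠ 0 → v i ≠ 0 := fun h' => mem_supp.1 (h (mem_supp.2 h'))
  show v i + v' i ≠ 0 ↔ _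
  rcases zmod2_cases (v i) with h1 | h1 <;> rcases zmod2_cases (v' i) with h2 | h2 <;>
    simp_all <;> decide

lemma decomp_not_zn {n : ℕ} {D : Set (Fin n → ZMod 2)} {v : Fin n → ZMod 2}
    (h : Decomposable D v) : ¬ IsZeroNeighbor D v := by
  obtain ⟨v1, v2, h1D, h2D, h1, h2, hdisj, rfl⟩ := h
  rintro ⟨_, _, hmin⟩
  apply hmin v1 h1D h1
  rw [supp_add_of_disjoint hdisj]
  constructor
  · exact Finset.subset_union_left
  · intro hsub
    obtain ⟨j, hj⟩ := Finset.nonempty_iff_ne_empty.2 (fun he => h2 (supp_eq_empty.1 he))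
    exact (Finset.disjoint_left.1 hdisj) (hsub (Finset.mem_union_right _ hj)) hj

lemma decomp_ne_zero {n : ℕ} {D : Set (Fin n → ZMod 2)} {v : Fin n → ZMod 2}
    (h : Decomposable D v) : v ≠ 0 := by
  obtain ⟨v1, v2, h1D, h2D, h1, h2, hdisj, rfl⟩ := h
  intro h0
  rw [← supp_eq_empty, supp_add_of_disjoint hdisj, Finset.union_eq_empty] at h0
  exact h1 (supp_eq_empty.1 h0.1)

lemma image_ssubset {n : ℕ} {s t : Finset (Fin n)} (h : s ⊂ t) :
    s.image (Fin.castSucc (n := n)) ⊂ t.image Fin.castSucc := by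
  exact Finset.image_ssubset_image (Fin.castSucc_injective n) |>.2 h

lemma insert_last_ssubset {n : ℕ} {s t : Finset (Fin n)} (h : s ⊂ t) :
    insert (Fin.last n) (s.image Fin.castSucc) ⊂ insert (Fin.last n) (t.image Fin.castSucc) := by
  obtain ⟨j, hjt, hjs⟩ := Finset.exists_of_ssubset h
  constructor
  · exact Finset.insert_subset_insert _ (Finset.image_subset_image h.subset)
  · intro hsub2
    have hmem : Fin.castSucc j ∈ insert (Fin.last n) ((s).image Fin.castSucc) :=
      hsub2 (Finset.mem_insert_of_mem (Finset.mem_image_of_mem _ hjt))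
    rcases Finset.mem_insert.1 hmem with h1 | h1
    · exact (Fin.castSucc_lt_last j).ne h1
    · obtain ⟨k, hk, hke⟩ := Finset.mem_image.1 h1
      rw [← Fin.castSucc_injective n hke] at hjs
      exact hjs hk

lemma main_iff {n : ℕ} (C : Submodule (ZMod 2) (Fin n → ZMod 2)) (v : Fin n → ZMod 2)
    (hvC : v ∈ C) (hv : v ≠ 0) :
    IsZeroNeighbor (extCode C) (extVec v) ↔
      IsZeroNeighbor (C : Set (Fin n → ZMod 2)) v ∨ OnlyOddDecomposable C v := by
  constructor
  · rintro ⟨-, -, hmin⟩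
    by_cases he : Even (wt v)
    · by_cases hzn : IsZeroNeighbor (C : Set (Fin n → ZMod 2)) v
      · exact Or.inl hzn
      right
      have hoddsub : ∀ v' : Fin n → ZMod 2, v' ∈ C → v' ≠ 0 → supp v' ⊂ supp v →
          ¬ Even (wt v') := by
        intro v' hv'C hv'ne hss he'
        apply hmin (extVec v') ⟨v', hv'C, rfl⟩ (extVec_ne_zero hv'ne)
        rw [supp_extVec_of_even he', supp_extVec_of_even he]
        exact image_ssubset hss
      have hex : ∃ v', v' ∈ C ∧ v' ≠ 0 ∧ supp v' ⊂ supp v := by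
        by_contra hc
        push_neg at hc
        exact hzn ⟨hvC, hv, fun v' hv' hne => hc v' hv' hne⟩
      obtain ⟨v', hv'C, hv'ne, hss⟩ := hex
      have hsub := hss.subset
      have hsupp2 : supp (v + v') = supp v \ supp v' := supp_add_of_subset hsub
      have hv''ne : v + v' ≠ 0 := by
        intro h0
        rw [← supp_eq_empty, hsupp2, Finset.sdiff_eq_empty_iff_subset] at h0
        exact hss.not_subset h0
      have hdisj : Disjoint (supp v') (supp (v + v')) := by
        rw [hsupp2]; exact Finset.disjoint_sdiff
      have hveq : v = v' + (v + v') := by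
        have h2 : v' + (v + v') = (v' + v') + v := by ring
        rw [h2, add_self_vec, zero_add]
      refine ⟨he, ⟨v', v + v', hv'C, C.add_mem hvC hv'C, hv'ne, hv''ne, hdisj, hveq⟩, ?_⟩
      intro v1 v2 h1C h2C h1 h2 hd heq
      have hs1 : supp v1 ⊂ supp v := by
        rw [heq, supp_add_of_disjoint hd]
        constructor
        · exact Finset.subset_union_left
        · intro hsub2
          obtain ⟨j, hj⟩ := Finset.nonempty_iff_ne_empty.2
            (fun he2 => h2 (supp_eq_empty.1 he2))
          exact (Finset.disjoint_left.1 hd) (hsub2 (Finset.mem_union_right _ hj)) hj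
      have hs2 : supp v2 ⊂ supp v := by
        rw [heq, supp_add_of_disjoint hd]
        constructor
        · exact Finset.subset_union_right
        · intro hsub2
          obtain ⟨j, hj⟩ := Finset.nonempty_iff_ne_empty.2
            (fun he1 => h1 (supp_eq_empty.1 he1))
          exact (Finset.disjoint_left.1 hd) hj (hsub2 (Finset.mem_union_left _ hj))
      exact ⟨Nat.not_even_iff_odd.1 (hoddsub v1 h1C h1 hs1),
        Nat.not_even_iff_odd.1 (hoddsub v2 h2C h2 hs2)⟩
    · left
      refine ⟨hvC, hv, ?_⟩
      intro v' hv'C hv'ne hss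
      apply hmin (extVec v') ⟨v', hv'C, rfl⟩ (extVec_ne_zero hv'ne)
      have hsub' : supp (extVec v') ⊆ insert (Fin.last n) ((supp v').image Fin.castSucc) := by
        by_cases he' : Even (wt v')
        · rw [supp_extVec_of_even he']; exact Finset.subset_insert _ _
        · rw [supp_extVec_of_odd he']
      rw [supp_extVec_of_odd he]
      exact lt_of_le_of_lt hsub' (insert_last_ssubset hss)
  · intro h
    refine ⟨⟨v, hvC, rfl⟩, extVec_ne_zero hv, ?_⟩
    rintro w' ⟨v', hv'C, rfl⟩ hw'ne hss
    have hv'ne : v' ≠ 0 := fun h0 => hw'ne (by rw [h0, extVec_zero])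
    rcases h with hzn | hood
    · by_cases he : Even (wt v)
      · rw [supp_extVec_of_even he] at hss
        have hlast : Fin.last n ∉ supp (extVec v') :=
          fun hl => last_not_mem_image _ (hss.subset hl)
        have he' : Even (wt v') := by
          by_contra ho
          exact hlast (by rw [supp_extVec_of_odd ho]; exact Finset.mem_insert_self _ _)
        rw [supp_extVec_of_even he'] at hss
        exact hzn.2.2 v' hv'C hv'ne
          ((Finset.image_ssubset_image (Fin.castSucc_injective n)).1 hss)
      · rw [supp_extVec_of_odd he] at hss
        have hsub : supp v' ⊆ supp v := by
          intro j hj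
          have hmem : Fin.castSucc j ∈ insert (Fin.last n) ((supp v).image Fin.castSucc) := by
            apply hss.subset
            by_cases he' : Even (wt v')
            · rw [supp_extVec_of_even he']; exact Finset.mem_image_of_mem _ hj
            · rw [supp_extVec_of_odd he']
              exact Finset.mem_insert_of_mem (Finset.mem_image_of_mem _ hj)
          rcases Finset.mem_insert.1 hmem with h1 | h1
          · exact absurd h1 (Fin.castSucc_lt_last j).ne
          · obtain ⟨k, hk, hke⟩ := Finset.mem_image.1 h1
            rwa [← Fin.castSucc_injective n hke]
        rcases eq_or_ne (supp v') (supp v) with heq | hne2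
        · have he' : ¬ Even (wt v') := by
            rw [show wt v' = wt v from by rw [wt, wt, heq]]; exact he
          rw [supp_extVec_of_odd he', heq] at hss
          exact hss.ne rfl
        · exact hzn.2.2 v' hv'C hv'ne ⟨hsub, fun hc => hne2 (Finset.Subset.antisymm hsub hc)⟩
    · have he : Even (wt v) := hood.1
      rw [supp_extVec_of_even he] at hss
      have hlast : Fin.last n ∉ supp (extVec v') :=
        fun hl => last_not_mem_image _ (hss.subset hl)
      have he' : Even (wt v') := by
        by_contra ho
        exact hlast (by rw [supp_extVec_of_odd ho]; exact Finset.mem_insert_self _ _)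
      rw [supp_extVec_of_even he'] at hss
      have hss' : supp v' ⊂ supp v :=
        (Finset.image_ssubset_image (Fin.castSucc_injective n)).1 hss
      have hsub := hss'.subset
      have hsupp2 : supp (v + v') = supp v \ supp v' := supp_add_of_subset hsub
      have hv''ne : v + v' ≠ 0 := by
        intro h0
        rw [← supp_eq_empty, hsupp2, Finset.sdiff_eq_empty_iff_subset] at h0
        exact hss'.not_subset h0
      have hdisj : Disjoint (supp v') (supp (v + v')) := by
        rw [hsupp2]; exact Finset.disjoint_sdiff
      have hveq : v = v' + (v + v') := by
        have h2 : v' + (v + v') = (v' + v') + v := by ring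
        rw [h2, add_self_vec, zero_add]
      have hodd := hood.2.2 v' (v + v') hv'C (C.add_mem hvC hv'C) hv'ne hv''ne hdisj hveq
      exact (Nat.not_even_iff_odd.2 hodd.1) he'

theorem lwd_extCode_eq {n : ℕ}
    (C : Submodule (ZMod 2) (Fin n → ZMod 2)) (i : ℕ) (hi : i ≤ n / 2) :
    Lw (extCode C) (2 * i) =
      Lw (C : Set (Fin n → ZMod 2)) (2 * i - 1) +
        Lw (C : Set (Fin n → ZMod 2)) (2 * i) + Nw C (2 * i) := by
  rcases Nat.eq_zero_or_pos i with rfl | hi1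
  · have hzn0 : ∀ (m : ℕ) (D : Set (Fin m → ZMod 2)), Lw D 0 = 0 := by
      intro m D
      rw [Lw, Set.ncard_eq_zero]
      ext w
      simp only [Set.mem_setOf_eq, Set.mem_empty_iff_false, iff_false, not_and]
      rintro ⟨_, hne, _⟩ hw
      exact hne (wt_eq_zero.1 hw)
    have hN0 : Nw C 0 = 0 := by
      rw [Nw, Set.ncard_eq_zero]
      ext w
      simp only [Set.mem_setOf_eq, Set.mem_empty_iff_false, iff_false, not_and]
      rintro _ hood hw
      exact decomp_ne_zero hood.2.1 (wt_eq_zero.1 hw)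
    simp [hzn0, hN0]
  · set S1 : Set (Fin n → ZMod 2) :=
      {v | IsZeroNeighbor (C : Set (Fin n → ZMod 2)) v ∧ wt v = 2 * i - 1} with hS1
    set S2 : Set (Fin n → ZMod 2) :=
      {v | IsZeroNeighbor (C : Set (Fin n → ZMod 2)) v ∧ wt v = 2 * i} with hS2
    set S3 : Set (Fin n → ZMod 2) :=
      {v | v ∈ C ∧ OnlyOddDecomposable C v ∧ wt v = 2 * i} with hS3
    have hset : {w : Fin (n+1) → ZMod 2 | IsZeroNeighbor (extCode C) w ∧ wt w = 2 * i}
        = extVec '' (S1 ∪ S2 ∪ S3) := by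
      ext w
      simp only [Set.mem_setOf_eq, Set.mem_image, Set.mem_union]
      constructor
      · rintro ⟨hzn, hw⟩
        obtain ⟨v, hvC, rfl⟩ := hzn.1
        have hv : v ≠ 0 := fun h0 => hzn.2.1 (by rw [h0, extVec_zero])
        have hor := (main_iff C v hvC hv).1 hzn
        by_cases he : Even (wt v)
        · have hwv : wt v = 2 * i := by rw [wt_extVec_of_even he] at hw; exact hw
          rcases hor with hz | ho
          · exact ⟨v, Or.inl (Or.inr ⟨hz, hwv⟩), rfl⟩
          · exact ⟨v, Or.inr ⟨hvC, ho, hwv⟩, rfl⟩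
        · have hwv : wt v = 2 * i - 1 := by
            rw [wt_extVec_of_odd he] at hw; omega
          rcases hor with hz | ho
          · exact ⟨v, Or.inl (Or.inl ⟨hz, hwv⟩), rfl⟩
          · exact absurd ho.1 he
      · rintro ⟨v, hmem, rfl⟩
        rcases hmem with (⟨hz, hw⟩ | ⟨hz, hw⟩) | ⟨hvC, ho, hw⟩
        · have hv : v ≠ 0 := hz.2.1
          have he : ¬ Even (wt v) := by rw [hw]; simp [Nat.even_sub, Nat.even_iff]; omega
          refine ⟨(main_iff C v hz.1 hv).2 (Or.inl hz), ?_⟩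
          rw [wt_extVec_of_odd he, hw]; omega
        · have hv : v ≠ 0 := hz.2.1
          have he : Even (wt v) := by rw [hw]; exact ⟨i, by omega⟩
          exact ⟨(main_iff C v hz.1 hv).2 (Or.inl hz), by rw [wt_extVec_of_even he, hw]⟩
        · have hv : v ≠ 0 := decomp_ne_zero ho.2.1
          exact ⟨(main_iff C v hvC hv).2 (Or.inr ho),
            by rw [wt_extVec_of_even ho.1, hw]⟩
    have hd12 : Disjoint S1 S2 := by
      rw [Set.disjoint_left]
      rintro v ⟨_, h1⟩ ⟨_, h2⟩
      omega
    have hd3 : Disjoint (S1 ∪ S2) S3 := by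
      rw [Set.disjoint_left]
      rintro v (⟨_, h1⟩ | ⟨hz, _⟩) ⟨_, ho, h3⟩
      · omega
      · exact decomp_not_zn ho.2.1 hz
    rw [Lw, hset, Set.ncard_image_of_injective _ extVec_injective,
      Set.ncard_union_eq hd3 (Set.toFinite _) (Set.toFinite _),
      Set.ncard_union_eq hd12 (Set.toFinite _) (Set.toFinite _)]
    rfl
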